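/- Non-backtracking path expansion: let G = (V, E) be a finite simple κ-regular graph with κ ≥ 2, and let H = (H(u,v))_{u,v ∈ V} be a Hermitian complex matrix satisfying the unimodality condition |H(u,v)| = 1 if {u,v} ∈ E and H(u,v) = 0 otherwise (in particular the diagonal vanishes). Then for every n ≥ 0 and all u, v ∈ V, the (u,v) entry of the matrix P_n^{(κ)}(H/(2√(κ−1))) (the polynomial P_n^{(κ)} evaluated at the matrix H/(2√(κ−1))) equals the sum, over all paths u = u_0, u_1, …, u_{n−1}, u_n = v in G with {u_j, u_{j+1}} ∈ E for 0 ≤ j ≤ n−1 and satisfying the non-backtracking condition u_j ≠ u_{j+2} for 0 ≤ j ≤ n−2, of the products ∏_{j=0}^{n−1} H(u_j, u_{j+1})/√(κ−1). -/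

import Mathlib

open Polynomial

/-- The polynomials `P_n^{(κ)} = U_n - (κ-1)⁻¹ U_{n-2}` (with `P_0 = 1`, `P_1 = U_1`),
where `U_n` is the Chebyshev polynomial of the second kind. -/
noncomputable def Pkappa (κ : ℝ) : ℕ → Polynomial ℝ
  | 0 => 1
  | 1 => Chebyshev.U ℝ 1
  | (n + 2) => Chebyshev.U ℝ ((n : ℤ) + 2) - Polynomial.C (κ - 1)⁻¹ * Chebyshev.U ℝ (n : ℤ)

set_option linter.unusedSectionVars false
open Finset
section aux
section core
variable {V : Type} [Fintype V] [DecidableEq V] (G : SimpleGraph V) [DecidableRel G.Adj]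
  (H : Matrix V V ℂ)

/-- Condition for a non-backtracking path from `w` to `v` whose second vertex avoids `a`. -/
def TCond (n : ℕ) (w v a : V) (p : Fin (n + 1) → V) : Prop :=
  p 0 = w ∧ p (Fin.last n) = v ∧
    (∀ j : Fin n, G.Adj (p j.castSucc) (p j.succ)) ∧
    (∀ (j : ℕ) (h : j + 2 ≤ n), p ⟨j, by omega⟩ ≠ p ⟨j + 2, by omega⟩) ∧
    (∀ _ : 1 ≤ n, p ⟨1, by omega⟩ ≠ a)

open scoped Classical in
noncomputable def Tsum (n : ℕ) (w v a : V) : ℂ :=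
  ∑ p : Fin (n + 1) → V,
    if TCond G n w v a p then ∏ j : Fin n, H (p j.castSucc) (p j.succ) else 0

lemma cons_mk_succ {n : ℕ} (x : V) (p : Fin (n + 1) → V) (j : ℕ) (h : j + 1 < n + 2) :
    (Fin.cons x p : Fin (n + 2) → V) ⟨j + 1, h⟩ = p ⟨j, by omega⟩ := by
  have : (⟨j + 1, h⟩ : Fin (n + 2)) = Fin.succ ⟨j, by omega⟩ := rfl
  rw [this, Fin.cons_succ]

lemma tcond_cons {n : ℕ} (w v a x : V) (p : Fin (n + 1) → V) :
    TCond G (n + 1) w v a (Fin.cons x p) ↔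
      x = w ∧ G.Adj x (p 0) ∧ p 0 ≠ a ∧ TCond G n (p 0) v x p := by
  unfold TCond
  constructor
  · rintro ⟨h0, hl, hadj, hnb, h1⟩
    have hadj0 := hadj 0
    simp only [Fin.castSucc_zero, Fin.cons_zero, Fin.succ_zero_eq_one] at hadj0
    have e1 : (1 : Fin (n + 2)) = (⟨1, by omega⟩ : Fin (n + 2)) := rfl
    rw [e1, cons_mk_succ] at hadj0
    refine ⟨by simpa using h0, hadj0, ?_, rfl, ?_, ?_, ?_, ?_⟩
    · have := h1 (by omega)
      rwa [cons_mk_succ] at this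
    · have : Fin.last (n + 1) = Fin.succ (Fin.last n) := (Fin.succ_last n).symm
      rw [this, Fin.cons_succ] at hl; exact hl
    · intro j
      have := hadj j.succ
      rwa [← Fin.succ_castSucc, Fin.cons_succ, Fin.cons_succ] at this
    · intro j hj
      have := hnb (j + 1) (by omega)
      rwa [cons_mk_succ, cons_mk_succ] at this
    · intro hn
      have := hnb 0 (by omega)
      rw [cons_mk_succ] at this
      have e0 : (⟨0, by omega⟩ : Fin (n + 2)) = 0 := rfl
      rw [e0, Fin.cons_zero] at this
      exact fun he => this (by rw [← he])
  · rintro ⟨hx, hadj0, hne, h0, hl, hadj, hnb, h1⟩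
    refine ⟨by simpa using hx, ?_, ?_, ?_, ?_⟩
    · have : Fin.last (n + 1) = Fin.succ (Fin.last n) := (Fin.succ_last n).symm
      rw [this, Fin.cons_succ]; exact hl
    · rw [Fin.forall_fin_succ]
      constructor
      · simpa [h0] using hadj0
      · intro j
        rw [← Fin.succ_castSucc, Fin.cons_succ, Fin.cons_succ]; exact hadj j
    · intro j hj
      match j, hj with
      | 0, hj =>
        rw [cons_mk_succ]
        have e0 : (⟨0, by omega⟩ : Fin (n + 2)) = 0 := rfl
        rw [e0, Fin.cons_zero]
        have := h1 (by omega)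
        exact fun he => this (by rw [← he])
      | (k + 1), hj =>
        rw [cons_mk_succ, cons_mk_succ]
        exact hnb k (by omega)
    · intro _
      rw [cons_mk_succ]; exact hne

lemma prod_cons {n : ℕ} (x : V) (p : Fin (n + 1) → V) :
    (∏ j : Fin (n + 1), H ((Fin.cons x p : Fin (n + 2) → V) j.castSucc) ((Fin.cons x p : Fin (n + 2) → V) j.succ)) =
      H x (p 0) * ∏ j : Fin n, H (p j.castSucc) (p j.succ) := by
  rw [Fin.prod_univ_succ]
  congr 1

end core

section core2
variable {V : Type} [Fintype V] [DecidableEq V] (G : SimpleGraph V) [DecidableRel G.Adj]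
  (H : Matrix V V ℂ)

open scoped Classical

lemma Tsum_succ (hH0 : ∀ x y : V, ¬ G.Adj x y → H x y = 0) (n : ℕ) (w v a : V) :
    Tsum G H (n + 1) w v a =
      (∑ x : V, H w x * Tsum G H n x v w) - H w a * Tsum G H n a v w := by
  unfold Tsum
  rw [← Equiv.sum_comp (Fin.consEquiv (fun _ : Fin (n + 2) => V))]
  rw [Fintype.sum_prod_type]
  have key : ∀ (x : V) (p : Fin (n + 1) → V),
      (if TCond G (n + 1) w v a ((Fin.consEquiv (fun _ : Fin (n + 2) => V)) (x, p)) then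
          ∏ j : Fin (n + 1),
            H (((Fin.consEquiv (fun _ : Fin (n + 2) => V)) (x, p)) j.castSucc)
              (((Fin.consEquiv (fun _ : Fin (n + 2) => V)) (x, p)) j.succ)
        else 0) =
      if x = w then
        (if p 0 ≠ a ∧ TCond G n (p 0) v w p then
          H w (p 0) * ∏ j : Fin n, H (p j.castSucc) (p j.succ) else 0)
      else 0 := by
    intro x p
    have hcons : ((Fin.consEquiv (fun _ : Fin (n + 2) => V)) (x, p)) = Fin.cons x p := rfl
    rw [hcons]
    by_cases hx : x = w
    · subst hx
      rw [if_pos rfl, _root_.prod_cons]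
      by_cases hadj : G.Adj x (p 0)
      · by_cases hc : p 0 ≠ a ∧ TCond G n (p 0) v x p
        · rw [if_pos ((tcond_cons G x v a x p).mpr ⟨rfl, hadj, hc.1, hc.2⟩), if_pos hc]
        · rw [if_neg, if_neg hc]
          rw [tcond_cons]; tauto
      · rw [if_neg, hH0 _ _ hadj]
        · by_cases hc : p 0 ≠ a ∧ TCond G n (p 0) v x p <;> simp [hc]
        · rw [tcond_cons]; tauto
    · rw [if_neg hx, if_neg (by rw [tcond_cons]; tauto)]
  simp only [key]
  rw [Finset.sum_comm]
  have coll : ∀ p : Fin (n + 1) → V,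
      (∑ x : V, if x = w then
        (if p 0 ≠ a ∧ TCond G n (p 0) v w p then
          H w (p 0) * ∏ j : Fin n, H (p j.castSucc) (p j.succ) else 0) else 0) =
      (if p 0 ≠ a ∧ TCond G n (p 0) v w p then
          H w (p 0) * ∏ j : Fin n, H (p j.castSucc) (p j.succ) else 0) := by
    intro p
    rw [Finset.sum_ite_eq' Finset.univ w, if_pos (Finset.mem_univ w)]
  simp only [coll]
  -- group by the first vertex of the tail
  have key2 : ∀ p : Fin (n + 1) → V,
      (if p 0 ≠ a ∧ TCond G n (p 0) v w p then
          H w (p 0) * ∏ j : Fin n, H (p j.castSucc) (p j.succ) else 0) =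
      ∑ x : V, (if x ≠ a ∧ TCond G n x v w p then
          H w x * ∏ j : Fin n, H (p j.castSucc) (p j.succ) else 0) := by
    intro p
    have : ∀ x : V, (if x ≠ a ∧ TCond G n x v w p then
          H w x * ∏ j : Fin n, H (p j.castSucc) (p j.succ) else 0) =
        if x = p 0 then (if x ≠ a ∧ TCond G n x v w p then
          H w x * ∏ j : Fin n, H (p j.castSucc) (p j.succ) else 0) else 0 := by
      intro x
      by_cases hc : x ≠ a ∧ TCond G n x v w p
      · rw [if_pos hc, if_pos hc.2.1.symm]
      · rw [if_neg hc]
        by_cases hx : x = p 0 <;> simp [hx]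
    rw [Finset.sum_congr rfl fun x _ => this x,
      Finset.sum_ite_eq' Finset.univ (p 0), if_pos (Finset.mem_univ (p 0))]
  rw [Finset.sum_congr rfl fun p _ => key2 p]
  rw [Finset.sum_comm]
  have key3 : ∀ x : V,
      (∑ p : Fin (n + 1) → V, if x ≠ a ∧ TCond G n x v w p then
          H w x * ∏ j : Fin n, H (p j.castSucc) (p j.succ) else 0) =
      (if x ≠ a then H w x * Tsum G H n x v w else 0) := by
    intro x
    by_cases hxa : x ≠ a
    · rw [if_pos hxa]
      unfold Tsum
      rw [Finset.mul_sum]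
      apply Finset.sum_congr rfl
      intro p _
      by_cases hc : TCond G n x v w p <;> simp [hc, hxa]
    · rw [if_neg hxa]
      apply Finset.sum_eq_zero
      intro p _
      rw [if_neg (by tauto)]
  simp only [key3]
  have final : ∀ x : V, (if x ≠ a then H w x * Tsum G H n x v w else 0) =
      H w x * Tsum G H n x v w - (if x = a then H w x * Tsum G H n x v w else 0) := by
    intro x
    by_cases h : x = a <;> simp [h]
  simp only [final]
  rw [Finset.sum_sub_distrib, Finset.sum_ite_eq' Finset.univ a, if_pos (Finset.mem_univ a)]
  rfl

end core2

section core3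
variable {V : Type} [Fintype V] [DecidableEq V] (G : SimpleGraph V) [DecidableRel G.Adj]
  (H : Matrix V V ℂ)

open scoped Classical

lemma tcond_zero (w v a : V) (p : Fin 1 → V) :
    TCond G 0 w v a p ↔ (p 0 = w ∧ p 0 = v) := by
  unfold TCond
  constructor
  · rintro ⟨h1, h2, -, -, -⟩; exact ⟨h1, h2⟩
  · rintro ⟨h1, h2⟩
    exact ⟨h1, h2, fun j => j.elim0, fun j h => absurd h (by omega),
      fun h => absurd h (by omega)⟩

lemma Tsum_zero (w v a : V) : Tsum G H 0 w v a = if w = v then 1 else 0 := by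
  unfold Tsum
  have h1 : ∀ p : Fin 1 → V,
      (if TCond G 0 w v a p then ∏ j : Fin 0, H (p j.castSucc) (p j.succ) else 0) =
      if p 0 = w ∧ p 0 = v then 1 else 0 := by
    intro p
    have hP : (∏ j : Fin 0, H (p j.castSucc) (p j.succ)) = 1 := by simp
    rw [hP]
    exact if_congr (tcond_zero G w v a p) rfl rfl
  rw [Finset.sum_congr rfl fun p _ => h1 p]
  rw [show (∑ p : Fin 1 → V, if p 0 = w ∧ p 0 = v then (1:ℂ) else 0) =
      ∑ x : V, if x = w ∧ x = v then (1:ℂ) else 0 from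
    Fintype.sum_equiv (Equiv.funUnique (Fin 1) V) _ _ (fun p => rfl)]
  by_cases hwv : w = v
  · subst hwv
    simp only [and_self]
    rw [Finset.sum_ite_eq' Finset.univ w (fun _ => (1:ℂ)), if_pos (Finset.mem_univ w)]
    simp
  · rw [if_neg hwv]
    apply Finset.sum_eq_zero
    intro x _
    rw [if_neg (by rintro ⟨rfl, rfl⟩; exact hwv rfl)]

/-- Sum over non-backtracking paths from `u` to `v` of length `n`. -/
noncomputable def PS (n : ℕ) (u v : V) : ℂ := Tsum G H n u v u

lemma PS_succ (hH0 : ∀ x y : V, ¬ G.Adj x y → H x y = 0) (n : ℕ) (u v : V) :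
    PS G H (n + 1) u v = ∑ x : V, H u x * Tsum G H n x v u := by
  unfold PS
  rw [Tsum_succ G H hH0, hH0 u u (G.irrefl), zero_mul, sub_zero]

lemma Tsum_eq_PS_sub (hH0 : ∀ x y : V, ¬ G.Adj x y → H x y = 0) (n : ℕ) (x v a : V) :
    Tsum G H (n + 1) x v a = PS G H (n + 1) x v - H x a * Tsum G H n a v x := by
  rw [Tsum_succ G H hH0, PS_succ G H hH0]

lemma PS_zero (u v : V) : PS G H 0 u v = if u = v then 1 else 0 := Tsum_zero G H u v u

lemma PS_one (hH0 : ∀ x y : V, ¬ G.Adj x y → H x y = 0) (u v : V) :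
    PS G H 1 u v = H u v := by
  rw [PS_succ G H hH0]
  have : ∀ x : V, H u x * Tsum G H 0 x v u = if x = v then H u x else 0 := by
    intro x
    rw [Tsum_zero]
    by_cases h : x = v <;> simp [h]
  rw [Finset.sum_congr rfl fun x _ => this x,
    Finset.sum_ite_eq' Finset.univ v (fun x => H u x), if_pos (Finset.mem_univ v)]

lemma sum_H_mul (hH0 : ∀ x y : V, ¬ G.Adj x y → H x y = 0) (u : V) (g : V → ℂ) :
    ∑ x ∈ G.neighborFinset u, H u x * g x = ∑ x : V, H u x * g x := by
  apply Finset.sum_subset (Finset.subset_univ _)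
  intro x _ hx
  rw [hH0 u x (by simpa using hx), zero_mul]

lemma sum_adj_Tsum {κ : ℕ} (hreg : G.IsRegularOfDegree κ)
    (hH0 : ∀ x y : V, ¬ G.Adj x y → H x y = 0) (n : ℕ) (u v : V) :
    ∑ x ∈ G.neighborFinset u, Tsum G H n u v x =
      (if n = 0 then (κ : ℂ) else (κ : ℂ) - 1) * PS G H n u v := by
  have hcard : (G.neighborFinset u).card = κ := by
    rw [SimpleGraph.card_neighborFinset_eq_degree]; exact hreg u
  cases n with
  | zero =>
    rw [if_pos rfl]
    rw [Finset.sum_congr rfl fun x _ => Tsum_zero G H u v x]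
    rw [Finset.sum_const, hcard, PS_zero]
    simp [nsmul_eq_mul]
  | succ m =>
    rw [if_neg (Nat.succ_ne_zero m)]
    rw [Finset.sum_congr rfl fun x _ => Tsum_eq_PS_sub G H hH0 m u v x]
    rw [Finset.sum_sub_distrib, Finset.sum_const, hcard,
      sum_H_mul G H hH0 u (fun x => Tsum G H m x v u), ← PS_succ G H hH0]
    rw [nsmul_eq_mul]
    ring

lemma PS_rec {κ : ℕ} (hreg : G.IsRegularOfDegree κ)
    (hherm : H.IsHermitian)
    (hH1 : ∀ x y : V, G.Adj x y → ‖H x y‖ = 1)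
    (hH0 : ∀ x y : V, ¬ G.Adj x y → H x y = 0) (n : ℕ) (u v : V) :
    PS G H (n + 2) u v = (∑ x : V, H u x * PS G H (n + 1) x v) -
      (if n = 0 then (κ : ℂ) else (κ : ℂ) - 1) * PS G H n u v := by
  rw [PS_succ G H hH0 (n + 1)]
  rw [Finset.sum_congr rfl fun x _ =>
    congrArg (fun z => H u x * z) (Tsum_eq_PS_sub G H hH0 n x v u)]
  have expand : ∀ x : V, H u x * (PS G H (n + 1) x v - H x u * Tsum G H n u v x) =
      H u x * PS G H (n + 1) x v - (H u x * H x u) * Tsum G H n u v x := by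
    intro x; ring
  rw [Finset.sum_congr rfl fun x _ => expand x, Finset.sum_sub_distrib]
  congr 1
  have hmulconj : ∀ x : V, (H u x * H x u) * Tsum G H n u v x =
      if x ∈ G.neighborFinset u then Tsum G H n u v x else 0 := by
    intro x
    have hco : H x u = (starRingEnd ℂ) (H u x) := (hherm.apply x u).symm
    by_cases hadj : G.Adj u x
    · rw [if_pos (by simpa using hadj), hco, Complex.mul_conj]
      have : Complex.normSq (H u x) = 1 := by
        rw [Complex.normSq_eq_norm_sq]
        have := hH1 u x hadj
        rw [this]; norm_num
      rw [this]
      simp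
    · rw [if_neg (by simpa using hadj), hH0 u x hadj]
      ring
  rw [Finset.sum_congr rfl fun x _ => hmulconj x, Finset.sum_ite_mem,
    Finset.univ_inter, sum_adj_Tsum G H hreg hH0]

end core3

section algebra
variable {V : Type} [Fintype V] [DecidableEq V] (G : SimpleGraph V) [DecidableRel G.Adj]
  (H : Matrix V V ℂ)

/-- The matrix of non-backtracking path sums. -/
noncomputable def PSmat (n : ℕ) : Matrix V V ℂ := Matrix.of fun u v => PS G H n u v

lemma PSmat_zero : PSmat G H 0 = 1 := by
  ext u v
  rw [PSmat, Matrix.of_apply, PS_zero, Matrix.one_apply]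

lemma PSmat_one (hH0 : ∀ x y : V, ¬ G.Adj x y → H x y = 0) : PSmat G H 1 = H := by
  ext u v
  rw [PSmat, Matrix.of_apply, PS_one G H hH0]

lemma PSmat_rec {κ : ℕ} (hreg : G.IsRegularOfDegree κ)
    (hherm : H.IsHermitian)
    (hH1 : ∀ x y : V, G.Adj x y → ‖H x y‖ = 1)
    (hH0 : ∀ x y : V, ¬ G.Adj x y → H x y = 0) (n : ℕ) :
    PSmat G H (n + 2) = H * PSmat G H (n + 1) -
      (if n = 0 then (κ : ℂ) else (κ : ℂ) - 1) • PSmat G H n := by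
  ext u v
  rw [Matrix.sub_apply, Matrix.mul_apply, Matrix.smul_apply]
  rw [PSmat, PSmat, PSmat, Matrix.of_apply, Matrix.of_apply]
  rw [PS_rec G H hreg hherm hH1 hH0 n u v]
  simp [smul_eq_mul]

lemma Pk_two (κr : ℝ) : Pkappa κr 2 =
    2 * X * Pkappa κr 1 - Pkappa κr 0 - C (κr - 1)⁻¹ := by
  simp only [Pkappa]
  push_cast
  norm_num
  have h2 := Chebyshev.U_add_two ℝ 0
  norm_num at h2
  linear_combination h2

lemma Pk_rec (κr : ℝ) (n : ℕ) :
    Pkappa κr (n + 3) = 2 * X * Pkappa κr (n + 2) - Pkappa κr (n + 1) := by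
  cases n with
  | zero =>
    show Chebyshev.U ℝ (((1:ℕ):ℤ) + 2) - C (κr - 1)⁻¹ * Chebyshev.U ℝ ((1:ℕ):ℤ) =
      2 * X * (Chebyshev.U ℝ (((0:ℕ):ℤ) + 2) - C (κr - 1)⁻¹ * Chebyshev.U ℝ ((0:ℕ):ℤ)) -
        Chebyshev.U ℝ 1
    push_cast
    norm_num
    have h3 := Chebyshev.U_add_two ℝ 1
    norm_num at h3
    rw [h3]
    ring
  | succ m =>
    show Chebyshev.U ℝ (((m+2:ℕ):ℤ) + 2) - C (κr - 1)⁻¹ * Chebyshev.U ℝ ((m+2:ℕ):ℤ) =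
      2 * X * (Chebyshev.U ℝ (((m+1:ℕ):ℤ) + 2) - C (κr - 1)⁻¹ * Chebyshev.U ℝ ((m+1:ℕ):ℤ)) -
        (Chebyshev.U ℝ (((m:ℕ):ℤ) + 2) - C (κr - 1)⁻¹ * Chebyshev.U ℝ ((m:ℕ):ℤ))
    push_cast
    have h3 := Chebyshev.U_add_two ℝ ((m:ℤ) + 2)
    have h1 := Chebyshev.U_add_two ℝ (m:ℤ)
    rw [show ((m:ℤ) + 1 + 2 : ℤ) = (m:ℤ) + 2 + 1 from by ring]
    linear_combination h3 - C (κr - 1)⁻¹ * h1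

end algebra

section main
variable {V : Type} [Fintype V] [DecidableEq V] (G : SimpleGraph V) [DecidableRel G.Adj]
  (H : Matrix V V ℂ)

lemma aeval2X (M : Matrix V V ℂ) (p : ℝ[X]) :
    aeval M ((2 : ℝ[X]) * X * p) = (2:ℝ) • (M * aeval M p) := by
  have h : (2 : ℝ[X]) * X * p = (2:ℝ) • (X * p) := by
    rw [Polynomial.smul_eq_C_mul, map_ofNat, mul_assoc]
  rw [h, map_smul, map_mul, aeval_X]

lemma main_aeval (κ : ℕ) (hκ : 2 ≤ κ) (hreg : G.IsRegularOfDegree κ)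
    (hherm : H.IsHermitian)
    (hH1 : ∀ x y : V, G.Adj x y → ‖H x y‖ = 1)
    (hH0 : ∀ x y : V, ¬ G.Adj x y → H x y = 0) (n : ℕ) :
    aeval ((((2 * Real.sqrt ((κ : ℝ) - 1)) : ℝ) : ℂ)⁻¹ • H) (Pkappa (κ : ℝ) n) =
      ((((Real.sqrt ((κ : ℝ) - 1) : ℝ) : ℂ)) ^ n)⁻¹ • PSmat G H n := by
  set s : ℝ := Real.sqrt ((κ : ℝ) - 1) with hs_def
  set sC : ℂ := ((s : ℝ) : ℂ) with hsC_def
  set M : Matrix V V ℂ := (((2 * s : ℝ) : ℂ))⁻¹ • H with hM_def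
  have hκ2 : (2:ℝ) ≤ (κ:ℝ) := by exact_mod_cast hκ
  have hq0 : (0:ℝ) < (κ:ℝ) - 1 := by linarith
  have hs0 : 0 < s := Real.sqrt_pos.mpr hq0
  have hsC0 : sC ≠ 0 := by
    simp only [hsC_def]
    exact_mod_cast hs0.ne'
  have hs2 : sC ^ 2 = (κ:ℂ) - 1 := by
    rw [hsC_def, ← Complex.ofReal_pow, Real.sq_sqrt hq0.le]
    push_cast; ring
  have h2M : ∀ A : Matrix V V ℂ, (2:ℝ) • (M * A) = sC⁻¹ • (H * A) := by
    intro A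
    rw [hM_def, smul_mul_assoc, ← smul_assoc]
    congr 1
    rw [Complex.real_smul, Complex.ofReal_mul, mul_inv, ← mul_assoc, hsC_def]
    norm_num
  have phi0 : aeval M (Pkappa (κ:ℝ) 0) = (sC ^ 0)⁻¹ • PSmat G H 0 := by
    show aeval M (1 : ℝ[X]) = _
    rw [map_one, PSmat_zero, pow_zero, inv_one, one_smul]
  have phi1 : aeval M (Pkappa (κ:ℝ) 1) = (sC ^ 1)⁻¹ • PSmat G H 1 := by
    show aeval M (Chebyshev.U ℝ 1) = _
    rw [Chebyshev.U_one, show (2 * X : ℝ[X]) = 2 * X * 1 from (mul_one _).symm, aeval2X,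
      map_one, h2M, Matrix.mul_one, pow_one, PSmat_one G H hH0]
  have phi2 : aeval M (Pkappa (κ:ℝ) 2) = (sC ^ 2)⁻¹ • PSmat G H 2 := by
    rw [Pk_two, map_sub, map_sub, aeval2X, phi1, phi0, PSmat_zero, pow_zero, inv_one,
      one_smul, aeval_C]
    rw [mul_smul_comm, smul_comm (2:ℝ), h2M, smul_smul]
    rw [PSmat_rec G H hreg hherm hH1 hH0 0, if_pos rfl, PSmat_one G H hH0, PSmat_zero,
      smul_sub, smul_smul]
    rw [Algebra.algebraMap_eq_smul_one]
    rw [show (sC ^ 1)⁻¹ * sC⁻¹ = (sC ^ 2)⁻¹ from by rw [pow_one, ← mul_inv, ← sq]]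
    rw [sub_sub]
    congr 1
    rw [← algebraMap_smul (R := ℝ) ℂ (((κ:ℝ) - 1)⁻¹) (1 : Matrix V V ℂ)]
    nth_rewrite 1 [← one_smul ℂ (1 : Matrix V V ℂ)]
    rw [← add_smul]
    congr 1
    have hne : (κ:ℂ) - 1 ≠ 0 := by rw [← hs2]; exact pow_ne_zero 2 hsC0
    rw [hs2]
    have hmap : (algebraMap ℝ ℂ) (((κ:ℝ) - 1)⁻¹) = ((κ:ℂ) - 1)⁻¹ := by
      push_cast [Complex.coe_algebraMap]
      ring
    rw [hmap]
    field_simp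
    ring
  have step : ∀ m : ℕ, aeval M (Pkappa (κ:ℝ) (m+1)) = (sC ^ (m+1))⁻¹ • PSmat G H (m+1) →
      aeval M (Pkappa (κ:ℝ) (m+2)) = (sC ^ (m+2))⁻¹ • PSmat G H (m+2) →
      aeval M (Pkappa (κ:ℝ) (m+3)) = (sC ^ (m+3))⁻¹ • PSmat G H (m+3) := by
    intro m h1 h2
    rw [Pk_rec, map_sub, aeval2X, h1, h2]
    rw [mul_smul_comm, smul_comm (2:ℝ), h2M, smul_smul]
    rw [PSmat_rec G H hreg hherm hH1 hH0 (m+1), if_neg (Nat.succ_ne_zero m),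
      smul_sub, smul_smul]
    congr 1
    · congr 1
      rw [← mul_inv, ← pow_succ]
    · congr 1
      rw [← hs2]
      field_simp
      ring
  have key : ∀ m : ℕ,
      aeval M (Pkappa (κ:ℝ) m) = (sC ^ m)⁻¹ • PSmat G H m ∧
      aeval M (Pkappa (κ:ℝ) (m+1)) = (sC ^ (m+1))⁻¹ • PSmat G H (m+1) ∧
      aeval M (Pkappa (κ:ℝ) (m+2)) = (sC ^ (m+2))⁻¹ • PSmat G H (m+2) := by
    intro m
    induction m with
    | zero => exact ⟨phi0, phi1, phi2⟩
    | succ k ih => exact ⟨ih.2.1, ih.2.2, step k ih.2.1 ih.2.2⟩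
  exact (key n).1

end main

end aux

/-- non-backtracking path expansion. For a κ-regular graph and a
Hermitian matrix with unimodular entries supported on the edges, the entries of
`P_n^{(κ)}(H/(2√(κ-1)))` are sums over non-backtracking paths. -/
theorem nonbacktracking_path_expansion
    (V : Type) [Fintype V] [DecidableEq V]
    (G : SimpleGraph V) [DecidableRel G.Adj]
    (κ : ℕ) (hκ : 2 ≤ κ) (hreg : G.IsRegularOfDegree κ)
    (H : Matrix V V ℂ) (hherm : H.IsHermitian)
    (hmod1 : ∀ u v : V, G.Adj u v → ‖H u v‖ = 1)
    (hmod0 : ∀ u v : V, ¬ G.Adj u v → H u v = 0)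
    (n : ℕ) (u v : V) :
    (Polynomial.aeval ((((2 * Real.sqrt ((κ : ℝ) - 1)) : ℝ) : ℂ)⁻¹ • H)
        (Pkappa (κ : ℝ) n)) u v =
      ∑ p ∈ @Finset.filter _
          (fun p : Fin (n + 1) → V =>
            p 0 = u ∧ p (Fin.last n) = v ∧
            (∀ j : Fin n, G.Adj (p j.castSucc) (p j.succ)) ∧
            (∀ (j : ℕ) (h : j + 2 ≤ n), p ⟨j, by omega⟩ ≠ p ⟨j + 2, by omega⟩))
          (Classical.decPred _) Finset.univ,
        ∏ j : Fin n, H (p j.castSucc) (p j.succ) / ((Real.sqrt ((κ : ℝ) - 1) : ℝ) : ℂ) := by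
  classical
  rw [main_aeval G H κ hκ hreg hherm hmod1 hmod0 n]
  rw [Matrix.smul_apply]
  have hprod : ∀ p : Fin (n + 1) → V,
      (∏ j : Fin n, H (p j.castSucc) (p j.succ) / ((Real.sqrt ((κ : ℝ) - 1) : ℝ) : ℂ)) =
      (∏ j : Fin n, H (p j.castSucc) (p j.succ)) /
        ((Real.sqrt ((κ : ℝ) - 1) : ℝ) : ℂ) ^ n := by
    intro p
    rw [Finset.prod_div_distrib, Finset.prod_const, Finset.card_univ, Fintype.card_fin]
  rw [Finset.sum_congr rfl fun p _ => hprod p, ← Finset.sum_div]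
  have hiff : ∀ p : Fin (n + 1) → V,
      (p 0 = u ∧ p (Fin.last n) = v ∧
        (∀ j : Fin n, G.Adj (p j.castSucc) (p j.succ)) ∧
        (∀ (j : ℕ) (h : j + 2 ≤ n), p ⟨j, by omega⟩ ≠ p ⟨j + 2, by omega⟩)) ↔
      TCond G n u v u p := by
    intro p
    constructor
    · rintro ⟨h0, hl, ha, hnb⟩
      refine ⟨h0, hl, ha, hnb, ?_⟩
      intro hn
      have hadj := ha ⟨0, hn⟩
      have e0 : ((⟨0, hn⟩ : Fin n).castSucc) = (0 : Fin (n + 1)) := rfl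
      have e1 : ((⟨0, hn⟩ : Fin n).succ) = (⟨1, by omega⟩ : Fin (n + 1)) := rfl
      rw [e0, e1, h0] at hadj
      exact (G.ne_of_adj hadj).symm
    · rintro ⟨h0, hl, ha, hnb, -⟩
      exact ⟨h0, hl, ha, hnb⟩
  have hsum : (∑ p ∈ @Finset.filter _
          (fun p : Fin (n + 1) → V =>
            p 0 = u ∧ p (Fin.last n) = v ∧
            (∀ j : Fin n, G.Adj (p j.castSucc) (p j.succ)) ∧
            (∀ (j : ℕ) (h : j + 2 ≤ n), p ⟨j, by omega⟩ ≠ p ⟨j + 2, by omega⟩))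
          (Classical.decPred _) Finset.univ,
        ∏ j : Fin n, H (p j.castSucc) (p j.succ)) = Tsum G H n u v u := by
    rw [Finset.sum_filter]
    have hpt : ∀ (p : Fin (n + 1) → V) (inst : Decidable (p 0 = u ∧ p (Fin.last n) = v ∧
            (∀ j : Fin n, G.Adj (p j.castSucc) (p j.succ)) ∧
            (∀ (j : ℕ) (h : j + 2 ≤ n), p ⟨j, by omega⟩ ≠ p ⟨j + 2, by omega⟩))),
        (@ite ℂ _ inst
          (∏ j : Fin n, H (p j.castSucc) (p j.succ)) 0) =
        (if TCond G n u v u p then ∏ j : Fin n, H (p j.castSucc) (p j.succ) else 0) :=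
      fun p inst => if_congr (hiff p) rfl rfl
    trans (∑ p : Fin (n + 1) → V,
      if TCond G n u v u p then ∏ j : Fin n, H (p j.castSucc) (p j.succ) else 0)
    · exact Finset.sum_congr rfl fun p _ => hpt p _
    · rfl
  rw [hsum]
  show _ • Tsum G H n u v u = _
  rw [smul_eq_mul, inv_mul_eq_div]
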